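/- Let α_1, β_1, α_2, β_2 > 0, let g(α_1,β_1,α_2,β_2) = ∫_0^1 f(x;α_1,β_1) I_x(α_2,β_2) dx and h(α_1,β_1,α_2,β_2) = B(α_1+α_2, β_1+β_2)/(B(α_1,β_1) B(α_2,β_2)). Then g(α_1, β_1+1, α_2, β_2) = g(α_1,β_1,α_2,β_2) − h(α_1,β_1,α_2,β_2)/β_1. -/

import Mathlib

open MeasureTheory Real Set

/-- The Beta function `B(a,b) = ∫₀¹ t^(a-1) (1-t)^(b-1) dt`. -/
noncomputable def betaFn (a b : ℝ) : ℝ :=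
  ∫ t in (0:ℝ)..1, t ^ (a - 1) * (1 - t) ^ (b - 1)

/-- The Beta(a,b) probability density on `[0,1]`. -/
noncomputable def betaPdf (a b : ℝ) (x : ℝ) : ℝ :=
  x ^ (a - 1) * (1 - x) ^ (b - 1) / betaFn a b

/-- The cumulative distribution function of Beta(a,b). -/
noncomputable def betaCdf (a b : ℝ) (x : ℝ) : ℝ :=
  (∫ t in (0:ℝ)..x, t ^ (a - 1) * (1 - t) ^ (b - 1)) / betaFn a b

/-- `g(α₁,β₁,α₂,β₂)`: the probability that an independent Beta(α₁,β₁) sample exceeds an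
independent Beta(α₂,β₂) sample. -/
noncomputable def probG (a₁ b₁ a₂ b₂ : ℝ) : ℝ :=
  ∫ x in (0:ℝ)..1, betaPdf a₁ b₁ x * betaCdf a₂ b₂ x

/-- `h(α₁,β₁,α₂,β₂) = B(α₁+α₂,β₁+β₂)/(B(α₁,β₁) B(α₂,β₂))`. -/
noncomputable def probH (a₁ b₁ a₂ b₂ : ℝ) : ℝ :=
  betaFn (a₁ + a₂) (b₁ + b₂) / (betaFn a₁ b₁ * betaFn a₂ b₂)

namespace BetaAux

/-- Integral over `0..1` only depends on values on `Ioo 0 1`. -/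
lemma integral01_congr {f g : ℝ → ℝ} (h : ∀ x ∈ Ioo (0:ℝ) 1, f x = g x) :
    ∫ x in (0:ℝ)..1, f x = ∫ x in (0:ℝ)..1, g x := by
  apply intervalIntegral.integral_congr_ae
  filter_upwards [compl_mem_ae_iff.mpr (measure_singleton (1:ℝ))] with x hx hmem
  rw [uIoc_of_le zero_le_one] at hmem
  exact h x ⟨hmem.1, lt_of_le_of_ne hmem.2 (by simpa using hx)⟩

/-- Integrability of the Beta integrand. -/
lemma intInt {a b : ℝ} (ha : 0 < a) (hb : 0 < b) :
    IntervalIntegrable (fun t : ℝ => t ^ (a - 1) * (1 - t) ^ (b - 1)) volume 0 1 := by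
  have h1 : IntervalIntegrable (fun t : ℝ => t ^ (a - 1) * (1 - t) ^ (b - 1))
      volume 0 (1/2) := by
    apply (intervalIntegral.intervalIntegrable_rpow' (by linarith)).mul_continuousOn
    apply ContinuousOn.rpow_const (continuousOn_const.sub continuousOn_id)
    intro x hx
    rw [uIcc_of_le (by norm_num)] at hx
    refine Or.inl ?_
    show (1:ℝ) - x ≠ 0
    intro h
    have h2 := sub_eq_zero.mp h
    have := hx.2
    linarith
  have h2 : IntervalIntegrable (fun t : ℝ => t ^ (a - 1) * (1 - t) ^ (b - 1))
      volume (1/2) 1 := by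
    have base : IntervalIntegrable (fun t : ℝ => (1 - t) ^ (b - 1)) volume (1/2) 1 := by
      have := (intervalIntegral.intervalIntegrable_rpow' (a := 0) (b := 1/2)
        (r := b - 1) (by linarith)).comp_sub_left 1
      norm_num at this
      exact this.symm
    apply base.continuousOn_mul
    apply ContinuousOn.rpow_const continuousOn_id
    intro x hx
    rw [uIcc_of_le (by norm_num)] at hx
    exact Or.inl (by simp only [id_eq]; have := hx.1; intro h; rw [h] at this; norm_num at this)
  exact h1.trans h2

/-- Positivity of the Beta function. -/
lemma betaFn_pos {a b : ℝ} (ha : 0 < a) (hb : 0 < b) : 0 < betaFn a b := by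
  apply intervalIntegral.intervalIntegral_pos_of_pos_on (intInt ha hb) _ one_pos
  intro x hx
  exact mul_pos (rpow_pos_of_pos hx.1 _) (rpow_pos_of_pos (by linarith [hx.2]) _)

/-- Derivative of `x ^ a * (1-x) ^ b` on `(0,1)`. -/
lemma hasDerivD {a b x : ℝ} (hx : x ∈ Ioo (0:ℝ) 1) :
    HasDerivAt (fun x : ℝ => x ^ a * (1 - x) ^ b)
      (a * (x ^ (a - 1) * (1 - x) ^ b) - b * (x ^ a * (1 - x) ^ (b - 1))) x := by
  have hx0 : x ≠ 0 := hx.1.ne'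
  have hx1 : (1 : ℝ) - x ≠ 0 := (sub_pos.mpr hx.2).ne'
  have h1 : HasDerivAt (fun x : ℝ => x ^ a) (a * x ^ (a - 1)) x :=
    Real.hasDerivAt_rpow_const (Or.inl hx0)
  have hlin : HasDerivAt (fun x : ℝ => 1 - x) (-1) x := by
    simpa using (hasDerivAt_id x).const_sub 1
  have h2 : HasDerivAt (fun x : ℝ => (1 - x) ^ b) (b * (1 - x) ^ (b - 1) * (-1)) x :=
    (Real.hasDerivAt_rpow_const (x := 1 - x) (p := b) (Or.inl hx1)).comp x hlin
  have : HasDerivAt (fun x : ℝ => x ^ a * (1 - x) ^ b)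
      (a * x ^ (a - 1) * (1 - x) ^ b + x ^ a * (b * (1 - x) ^ (b - 1) * -1)) x := h1.mul h2
  convert this using 1
  ring

/-- Continuity of `x ^ a * (1-x) ^ b` for positive exponents. -/
lemma contD {a b : ℝ} (ha : 0 < a) (hb : 0 < b) :
    Continuous (fun x : ℝ => x ^ a * (1 - x) ^ b) := by
  apply Continuous.mul
  · exact continuous_id.rpow_const fun x => Or.inr ha.le
  · exact (continuous_const.sub continuous_id).rpow_const fun x => Or.inr hb.le

/-- Continuity of the Beta integrand on `Ioo 0 1`. -/
lemma contPhi {a b : ℝ} :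
    ContinuousOn (fun t : ℝ => t ^ (a - 1) * (1 - t) ^ (b - 1)) (Ioo (0:ℝ) 1) := by
  apply ContinuousOn.mul
  · exact continuousOn_id.rpow_const fun t ht => Or.inl (by simpa using ht.1.ne')
  · exact (continuousOn_const.sub continuousOn_id).rpow_const
      fun t ht => Or.inl (by exact (sub_pos.mpr ht.2).ne')

/-- Derivative of the raw CDF. -/
lemma hasDerivF {a b x : ℝ} (ha : 0 < a) (hb : 0 < b) (hx : x ∈ Ioo (0:ℝ) 1) :
    HasDerivAt (fun u : ℝ => ∫ t in (0:ℝ)..u, t ^ (a - 1) * (1 - t) ^ (b - 1))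
      (x ^ (a - 1) * (1 - x) ^ (b - 1)) x := by
  apply intervalIntegral.integral_hasDerivAt_right
  · apply (intInt ha hb).mono_set
    rw [uIcc_of_le hx.1.le, uIcc_of_le zero_le_one]
    exact Icc_subset_Icc le_rfl hx.2.le
  · exact contPhi.stronglyMeasurableAtFilter isOpen_Ioo x hx
  · exact contPhi.continuousAt (Ioo_mem_nhds hx.1 hx.2)

/-- Pointwise splitting of the Beta integrand on `(0,1)`. -/
lemma phi_split {a b x : ℝ} (hx : x ∈ Ioo (0:ℝ) 1) :
    x ^ (a - 1) * (1 - x) ^ (b - 1)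
      = x ^ (a - 1) * (1 - x) ^ b + x ^ a * (1 - x) ^ (b - 1) := by
  have hx0 : x ≠ 0 := hx.1.ne'
  have hx1 : (1 : ℝ) - x ≠ 0 := (sub_pos.mpr hx.2).ne'
  have e1 : x ^ a = x ^ (a - 1) * x := by
    nth_rewrite 1 [show a = a - 1 + 1 by ring]
    exact Real.rpow_add_one hx0 _
  have e2 : (1 - x) ^ b = (1 - x) ^ (b - 1) * (1 - x) := by
    nth_rewrite 1 [show b = b - 1 + 1 by ring]
    exact Real.rpow_add_one hx1 _
  rw [e1, e2]; ring

/-- `a * B(a, b+1) = b * B(a+1, b)`. -/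
lemma beta_rec {a b : ℝ} (ha : 0 < a) (hb : 0 < b) :
    a * betaFn a (b + 1) = b * betaFn (a + 1) b := by
  have hI1 : IntervalIntegrable (fun x : ℝ => x ^ (a - 1) * (1 - x) ^ b) volume 0 1 := by
    simpa using intInt ha (by linarith : (0:ℝ) < b + 1)
  have hI2 : IntervalIntegrable (fun x : ℝ => x ^ a * (1 - x) ^ (b - 1)) volume 0 1 := by
    simpa using intInt (by linarith : (0:ℝ) < a + 1) hb
  have h0 : (∫ x in (0:ℝ)..1,
      (a * (x ^ (a - 1) * (1 - x) ^ b) - b * (x ^ a * (1 - x) ^ (b - 1)))) = 0 := by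
    rw [intervalIntegral.integral_eq_sub_of_hasDeriv_right
      (f := fun x : ℝ => x ^ a * (1 - x) ^ b)
      ((contD ha hb).continuousOn)
      (fun x hx => (hasDerivD (by simpa using hx)).hasDerivWithinAt)
      (((hI1.const_mul a).sub (hI2.const_mul b)))]
    simp [Real.zero_rpow ha.ne', Real.zero_rpow hb.ne']
  rw [intervalIntegral.integral_sub (hI1.const_mul a) (hI2.const_mul b),
    intervalIntegral.integral_const_mul, intervalIntegral.integral_const_mul] at h0
  unfold betaFn
  simp only [add_sub_cancel_right]
  linarith

/-- `B(a,b) = B(a,b+1) + B(a+1,b)`. -/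
lemma beta_split {a b : ℝ} (ha : 0 < a) (hb : 0 < b) :
    betaFn a b = betaFn a (b + 1) + betaFn (a + 1) b := by
  have hI1 : IntervalIntegrable (fun x : ℝ => x ^ (a - 1) * (1 - x) ^ b) volume 0 1 := by
    simpa using intInt ha (by linarith : (0:ℝ) < b + 1)
  have hI2 : IntervalIntegrable (fun x : ℝ => x ^ a * (1 - x) ^ (b - 1)) volume 0 1 := by
    simpa using intInt (by linarith : (0:ℝ) < a + 1) hb
  unfold betaFn
  simp only [add_sub_cancel_right]
  rw [← intervalIntegral.integral_add hI1 hI2]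
  exact integral01_congr fun x hx => phi_split hx

/-- `b * B(a,b) = (a+b) * B(a,b+1)`. -/
lemma beta_rec' {a b : ℝ} (ha : 0 < a) (hb : 0 < b) :
    b * betaFn a b = (a + b) * betaFn a (b + 1) := by
  have h3 := beta_split ha hb
  have h4 := beta_rec ha hb
  nlinarith [h3, h4]

/-- Continuity of the raw CDF on `[[0,1]]`. -/
lemma contF {a b : ℝ} (ha : 0 < a) (hb : 0 < b) :
    ContinuousOn (fun x : ℝ => ∫ t in (0:ℝ)..x, t ^ (a - 1) * (1 - t) ^ (b - 1))
      (Set.uIcc (0:ℝ) 1) :=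
  intervalIntegral.continuousOn_primitive_interval' (intInt ha hb) left_mem_uIcc

/-- Key integration by parts. -/
lemma key {a₁ b₁ a₂ b₂ : ℝ} (ha1 : 0 < a₁) (hb1 : 0 < b₁) (ha2 : 0 < a₂) (hb2 : 0 < b₂) :
    (∫ x in (0:ℝ)..1,
      (a₁ * (x ^ (a₁ - 1) * (1 - x) ^ b₁) - b₁ * (x ^ a₁ * (1 - x) ^ (b₁ - 1)))
        * (∫ t in (0:ℝ)..x, t ^ (a₂ - 1) * (1 - t) ^ (b₂ - 1)))
      = - betaFn (a₁ + a₂) (b₁ + b₂) := by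
  set F : ℝ → ℝ := fun x => ∫ t in (0:ℝ)..x, t ^ (a₂ - 1) * (1 - t) ^ (b₂ - 1) with hF
  have hI1 : IntervalIntegrable (fun x : ℝ => x ^ (a₁ - 1) * (1 - x) ^ b₁) volume 0 1 := by
    simpa using intInt ha1 (by linarith : (0:ℝ) < b₁ + 1)
  have hI2 : IntervalIntegrable (fun x : ℝ => x ^ a₁ * (1 - x) ^ (b₁ - 1)) volume 0 1 := by
    simpa using intInt (by linarith : (0:ℝ) < a₁ + 1) hb1
  have hu' : IntervalIntegrable
      (fun x : ℝ => a₁ * (x ^ (a₁ - 1) * (1 - x) ^ b₁) - b₁ * (x ^ a₁ * (1 - x) ^ (b₁ - 1)))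
      volume 0 1 := (hI1.const_mul a₁).sub (hI2.const_mul b₁)
  have hv' : IntervalIntegrable (fun t : ℝ => t ^ (a₂ - 1) * (1 - t) ^ (b₂ - 1)) volume 0 1 :=
    intInt ha2 hb2
  have hparts := intervalIntegral.integral_deriv_mul_eq_sub_of_hasDeriv_right
    (u := fun x : ℝ => x ^ a₁ * (1 - x) ^ b₁) (v := F)
    (u' := fun x : ℝ => a₁ * (x ^ (a₁ - 1) * (1 - x) ^ b₁) - b₁ * (x ^ a₁ * (1 - x) ^ (b₁ - 1)))
    (v' := fun t : ℝ => t ^ (a₂ - 1) * (1 - t) ^ (b₂ - 1))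
    ((contD ha1 hb1).continuousOn) (contF ha2 hb2)
    (fun x hx => (hasDerivD (by simpa using hx)).hasDerivWithinAt)
    (fun x hx => (hasDerivF ha2 hb2 (by simpa using hx)).hasDerivWithinAt)
    hu' hv'
  have hbnd : ((1:ℝ) ^ a₁ * (1 - 1) ^ b₁) * F 1 - ((0:ℝ) ^ a₁ * (1 - 0) ^ b₁) * F 0 = 0 := by
    simp [Real.zero_rpow ha1.ne', Real.zero_rpow hb1.ne']
  rw [hbnd] at hparts
  have hsplit := intervalIntegral.integral_add
    (hu'.mul_continuousOn (contF ha2 hb2))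
    (hv'.continuousOn_mul ((contD ha1 hb1).continuousOn))
  rw [hsplit] at hparts
  have hDv' : (∫ x in (0:ℝ)..1,
      (x ^ a₁ * (1 - x) ^ b₁) * (x ^ (a₂ - 1) * (1 - x) ^ (b₂ - 1)))
      = betaFn (a₁ + a₂) (b₁ + b₂) := by
    unfold betaFn
    apply integral01_congr
    intro x hx
    have hx0 : (0:ℝ) < x := hx.1
    have hx1 : (0:ℝ) < 1 - x := sub_pos.mpr hx.2
    have : x ^ a₁ * (1 - x) ^ b₁ * (x ^ (a₂ - 1) * (1 - x) ^ (b₂ - 1))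
        = (x ^ a₁ * x ^ (a₂ - 1)) * ((1 - x) ^ b₁ * (1 - x) ^ (b₂ - 1)) := by ring
    rw [this, ← Real.rpow_add hx0, ← Real.rpow_add hx1,
      show a₁ + (a₂ - 1) = a₁ + a₂ - 1 by ring, show b₁ + (b₂ - 1) = b₁ + b₂ - 1 by ring]
  rw [hDv'] at hparts
  linarith

end BetaAux

open BetaAux in
/-- Recurrence: incrementing β₁ by one. -/
theorem probG_beta1_succ (a₁ b₁ a₂ b₂ : ℝ)
    (hα₁ : 0 < a₁) (hβ₁ : 0 < b₁) (hα₂ : 0 < a₂) (hβ₂ : 0 < b₂) :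
    probG a₁ (b₁ + 1) a₂ b₂ = probG a₁ b₁ a₂ b₂ - probH a₁ b₁ a₂ b₂ / b₁ := by
  have hB1 := betaFn_pos hα₁ hβ₁
  have hB1' := betaFn_pos hα₁ (by linarith : (0:ℝ) < b₁ + 1)
  have hB2 := betaFn_pos hα₂ hβ₂
  have hI1 : IntervalIntegrable (fun x : ℝ => x ^ (a₁ - 1) * (1 - x) ^ b₁) volume 0 1 := by
    simpa using intInt hα₁ (by linarith : (0:ℝ) < b₁ + 1)
  have hI2 : IntervalIntegrable (fun x : ℝ => x ^ a₁ * (1 - x) ^ (b₁ - 1)) volume 0 1 := by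
    simpa using intInt (by linarith : (0:ℝ) < a₁ + 1) hβ₁
  set F : ℝ → ℝ := fun x => ∫ t in (0:ℝ)..x, t ^ (a₂ - 1) * (1 - t) ^ (b₂ - 1) with hFdef
  set I : ℝ := ∫ x in (0:ℝ)..1, (x ^ (a₁ - 1) * (1 - x) ^ (b₁ - 1)) * F x with hIdef
  set I' : ℝ := ∫ x in (0:ℝ)..1, (x ^ (a₁ - 1) * (1 - x) ^ b₁) * F x with hI'def
  set I'' : ℝ := ∫ x in (0:ℝ)..1, (x ^ a₁ * (1 - x) ^ (b₁ - 1)) * F x with hI''def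
  have hcF : ContinuousOn F (Set.uIcc (0:ℝ) 1) := contF hα₂ hβ₂
  have hg : probG a₁ b₁ a₂ b₂ = I / (betaFn a₁ b₁ * betaFn a₂ b₂) := by
    unfold probG betaPdf betaCdf
    have h : ∀ x : ℝ, x ^ (a₁ - 1) * (1 - x) ^ (b₁ - 1) / betaFn a₁ b₁ *
        ((∫ t in (0:ℝ)..x, t ^ (a₂ - 1) * (1 - t) ^ (b₂ - 1)) / betaFn a₂ b₂)
        = (1 / (betaFn a₁ b₁ * betaFn a₂ b₂)) * ((x ^ (a₁ - 1) * (1 - x) ^ (b₁ - 1)) * F x) := by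
      intro x
      rw [hFdef]
      field_simp
    simp_rw [h]
    rw [intervalIntegral.integral_const_mul, hIdef]
    ring
  have hg' : probG a₁ (b₁ + 1) a₂ b₂ = I' / (betaFn a₁ (b₁ + 1) * betaFn a₂ b₂) := by
    unfold probG betaPdf betaCdf
    have h : ∀ x : ℝ, x ^ (a₁ - 1) * (1 - x) ^ (b₁ + 1 - 1) / betaFn a₁ (b₁ + 1) *
        ((∫ t in (0:ℝ)..x, t ^ (a₂ - 1) * (1 - t) ^ (b₂ - 1)) / betaFn a₂ b₂)
        = (1 / (betaFn a₁ (b₁ + 1) * betaFn a₂ b₂)) * ((x ^ (a₁ - 1) * (1 - x) ^ b₁) * F x) := by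
      intro x
      rw [hFdef, add_sub_cancel_right]
      field_simp
    simp_rw [h]
    rw [intervalIntegral.integral_const_mul, hI'def]
    ring
  have hkey : a₁ * I' - b₁ * I'' = - betaFn (a₁ + a₂) (b₁ + b₂) := by
    have h := key hα₁ hβ₁ hα₂ hβ₂
    rw [show (fun x : ℝ =>
        (a₁ * (x ^ (a₁ - 1) * (1 - x) ^ b₁) - b₁ * (x ^ a₁ * (1 - x) ^ (b₁ - 1)))
          * (∫ t in (0:ℝ)..x, t ^ (a₂ - 1) * (1 - t) ^ (b₂ - 1)))
        = (fun x : ℝ => a₁ * ((x ^ (a₁ - 1) * (1 - x) ^ b₁) * F x)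
          - b₁ * ((x ^ a₁ * (1 - x) ^ (b₁ - 1)) * F x)) from funext fun x => by
        rw [hFdef]; ring] at h
    rw [intervalIntegral.integral_sub
        ((hI1.mul_continuousOn hcF).const_mul a₁)
        ((hI2.mul_continuousOn hcF).const_mul b₁),
      intervalIntegral.integral_const_mul, intervalIntegral.integral_const_mul] at h
    exact h
  have hsplit : I = I' + I'' := by
    rw [hIdef, hI'def, hI''def, ← intervalIntegral.integral_add
      (hI1.mul_continuousOn hcF) (hI2.mul_continuousOn hcF)]
    exact integral01_congr fun x hx => by rw [phi_split hx]; ring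
  have hrec := beta_rec' hα₁ hβ₁
  rw [hg, hg']
  unfold probH
  field_simp
  linear_combination I' * hrec
    + (- b₁ * betaFn a₁ (b₁ + 1)) * hsplit
    + (betaFn a₁ (b₁ + 1)) * hkey
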